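/- The placement map p(s,ζ₁,ζ₂) = r(s) + ζ₁u(s) + ζ₂v(s) is differentiable at almost every point of the interior of Ω, and at such points its Jacobian determinant equals det Dp(s,ζ₁,ζ₂) = 1 − ζ₁k′(s) − ζ₂k″(s). -/

import Mathlib

open MeasureTheory Set Filter Topology
open scoped ENNReal

noncomputable section

/-- Euclidean 3-space. -/
abbrev E3 : Type := EuclideanSpace ℝ (Fin 3)

/-- The cross product on `E3`. -/
def cross3 (a b : E3) : E3 :=
  WithLp.toLp 2 ![a 1 * b 2 - a 2 * b 1, a 2 * b 0 - a 0 * b 2, a 0 * b 1 - a 1 * b 0]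

/-- `(u, v, w, r)` is an (absolutely continuous) solution on `[0, L]` of the rod frame
system with flexural densities `k₁, k₂`, twist density `ω` and initial data
`(rhat, uhat, vhat, what)`:  the initial conditions hold, the candidate a.e. derivatives are
(interval) integrable, and each unknown is the indefinite integral of its a.e.
derivative (this is exactly absolute continuity together with the validity of the
differential system almost everywhere). -/
def RodSolution (L : ℝ) (k₁ k₂ ω : ℝ → ℝ) (rhat uhat vhat what : E3)
    (u v w r : ℝ → E3) : Prop :=
  u 0 = uhat ∧ v 0 = vhat ∧ w 0 = what ∧ r 0 = rhat ∧
  IntervalIntegrable (fun s => ω s • v s - k₁ s • w s) volume 0 L ∧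
  IntervalIntegrable (fun s => -(ω s) • u s - k₂ s • w s) volume 0 L ∧
  IntervalIntegrable (fun s => k₁ s • u s + k₂ s • v s) volume 0 L ∧
  IntervalIntegrable w volume 0 L ∧
  ∀ s ∈ Icc (0:ℝ) L,
    u s = uhat + ∫ t in (0:ℝ)..s, (ω t • v t - k₁ t • w t) ∧
    v s = vhat + ∫ t in (0:ℝ)..s, (-(ω t) • u t - k₂ t • w t) ∧
    w s = what + ∫ t in (0:ℝ)..s, (k₁ t • u t + k₂ t • v t) ∧
    r s = rhat + ∫ t in (0:ℝ)..s, w t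

/-- The placement map `p(s, ζ₁, ζ₂) = r(s) + ζ₁ u(s) + ζ₂ v(s)`, viewed as a map of
`ℝ³` into itself (the first coordinate is the arc-length parameter `s`). -/
def placement (r u v : ℝ → E3) (x : E3) : E3 :=
  r (x 0) + (x 1) • u (x 0) + (x 2) • v (x 0)

section Aux

lemma primSplit {f g : ℝ → ℝ} {s : ℝ} (hs : 0 ≤ s)
    (hf : IntervalIntegrable f volume 0 s) (hg : IntervalIntegrable g volume 0 s) :
    (∫ t in (0:ℝ)..s, f t) * (∫ t in (0:ℝ)..s, g t)
      = (∫ t in (0:ℝ)..s, f t * ∫ y in (0:ℝ)..t, g y)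
        + ∫ t in (0:ℝ)..s, g t * ∫ y in (0:ℝ)..t, f y := by
  set μ : Measure ℝ := volume.restrict (Ioc (0:ℝ) s) with hμ
  have hD : MeasurableSet {p : ℝ × ℝ | p.2 ≤ p.1} :=
    measurableSet_le measurable_snd measurable_fst
  have key : ∀ f g : ℝ → ℝ, Integrable f μ → Integrable g μ →
      (∫ z : ℝ × ℝ, Set.indicator {p : ℝ × ℝ | p.2 ≤ p.1} (fun z => f z.1 * g z.2) z
        ∂(μ.prod μ)) = ∫ t in (0:ℝ)..s, f t * ∫ y in (0:ℝ)..t, g y := by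
    intro f g hfi hgi
    have hφ : Integrable (fun z : ℝ × ℝ => f z.1 * g z.2) (μ.prod μ) := hfi.mul_prod hgi
    have hψ := hφ.indicator hD
    rw [MeasureTheory.integral_prod _ hψ, intervalIntegral.integral_of_le hs]
    refine setIntegral_congr_fun measurableSet_Ioc (fun t ht => ?_)
    have h1 : (fun y => Set.indicator {p : ℝ × ℝ | p.2 ≤ p.1}
        (fun z : ℝ × ℝ => f z.1 * g z.2) (t, y))
        = Set.indicator (Iic t) (fun y => f t * g y) := by
      funext y; by_cases h : y ≤ t <;> simp [Set.indicator_apply, h]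
    have h2 : Iic t ∩ Ioc 0 s = Ioc 0 t := by
      ext y
      simp only [mem_inter_iff, mem_Iic, mem_Ioc]
      exact ⟨fun ⟨h1, h2, h3⟩ => ⟨h2, h1⟩, fun ⟨h1', h2'⟩ => ⟨h2', h1', h2'.trans ht.2⟩⟩
    rw [h1, integral_indicator measurableSet_Iic, hμ,
      Measure.restrict_restrict measurableSet_Iic, h2,
      intervalIntegral.integral_of_le ht.1.le, MeasureTheory.integral_const_mul]
  have hφ : Integrable (fun z : ℝ × ℝ => f z.1 * g z.2) (μ.prod μ) := hf.1.mul_prod hg.1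
  have hψ := hφ.indicator hD
  have hD' : MeasurableSet {p : ℝ × ℝ | p.1 ≤ p.2} :=
    measurableSet_le measurable_fst measurable_snd
  have hψ' := hφ.indicator hD'
  have hswap : (∫ z : ℝ × ℝ, Set.indicator {p : ℝ × ℝ | p.1 ≤ p.2}
      (fun z : ℝ × ℝ => f z.1 * g z.2) z ∂(μ.prod μ))
      = ∫ t in (0:ℝ)..s, g t * ∫ y in (0:ℝ)..t, f y := by
    rw [← key g f hg.1 hf.1, ← MeasureTheory.integral_prod_swap]
    congr 1
    funext z
    by_cases h : z.1 ≤ z.2 <;> simp [Set.indicator_apply, h, Prod.swap, mul_comm]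
  have hdiag : (μ.prod μ) {p : ℝ × ℝ | p.1 = p.2} = 0 := by
    rw [Measure.prod_apply (measurableSet_eq_fun measurable_fst measurable_snd)]
    have : ∀ t : ℝ, μ (Prod.mk t ⁻¹' {p : ℝ × ℝ | p.1 = p.2}) = 0 := by
      intro t
      have : Prod.mk t ⁻¹' {p : ℝ × ℝ | p.1 = p.2} = {t} := by
        ext y; simp [eq_comm]
      rw [this]
      rw [hμ, Measure.restrict_apply (measurableSet_singleton t)]
      exact measure_mono_null Set.inter_subset_left Real.volume_singleton
    simp only [this, lintegral_const, zero_mul]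
  have hsum : (fun z : ℝ × ℝ => Set.indicator {p : ℝ × ℝ | p.2 ≤ p.1}
        (fun z : ℝ × ℝ => f z.1 * g z.2) z
      + Set.indicator {p : ℝ × ℝ | p.1 ≤ p.2} (fun z : ℝ × ℝ => f z.1 * g z.2) z)
      =ᵐ[μ.prod μ] (fun z : ℝ × ℝ => f z.1 * g z.2) := by
    have hpt : ∀ z : ℝ × ℝ, z.1 ≠ z.2 →
        Set.indicator {p : ℝ × ℝ | p.2 ≤ p.1} (fun z : ℝ × ℝ => f z.1 * g z.2) z
          + Set.indicator {p : ℝ × ℝ | p.1 ≤ p.2} (fun z : ℝ × ℝ => f z.1 * g z.2) z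
          = f z.1 * g z.2 := by
      intro z hne
      rcases lt_or_gt_of_ne hne with h | h
      · rw [Set.indicator_of_notMem (by simpa using not_le.2 h),
          Set.indicator_of_mem (by simpa using h.le), zero_add]
      · rw [Set.indicator_of_mem (by simpa using h.le),
          Set.indicator_of_notMem (by simpa using not_le.2 h), add_zero]
    refine ae_iff.2 (measure_mono_null (fun z hz => ?_) hdiag)
    simp only [mem_setOf_eq] at hz ⊢
    by_contra hne
    exact hz (hpt z hne)
  rw [intervalIntegral.integral_of_le hs, intervalIntegral.integral_of_le hs,
    ← key f g hf.1 hg.1, ← hswap]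
  rw [← MeasureTheory.integral_prod_mul]
  rw [← integral_congr_ae hsum, integral_add hψ hψ']


def IsPrim (L : ℝ) (F f : ℝ → ℝ) : Prop :=
  IntervalIntegrable f volume 0 L ∧ ∀ s ∈ Icc (0:ℝ) L, F s = F 0 + ∫ t in (0:ℝ)..s, f t

namespace IsPrim
variable {L : ℝ} {F f G g : ℝ → ℝ}

lemma continuousOn (hL : 0 ≤ L) (h : IsPrim L F f) : ContinuousOn F (Icc 0 L) := by
  have hint : IntegrableOn f (uIcc 0 L) volume := by
    rw [uIcc_of_le hL]
    exact (intervalIntegrable_iff_integrableOn_Icc_of_le hL).1 h.1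
  have hc : ContinuousOn (fun x => F 0 + ∫ t in (0:ℝ)..x, f t) (uIcc (0:ℝ) L) :=
    continuousOn_const.add (intervalIntegral.continuousOn_primitive_interval hint)
  rw [uIcc_of_le hL] at hc
  exact ContinuousOn.congr hc (fun s hs => h.2 s hs)

lemma add (h1 : IsPrim L F f) (h2 : IsPrim L G g) :
    IsPrim L (fun s => F s + G s) (fun t => f t + g t) := by
  refine ⟨h1.1.add h2.1, fun s hs => ?_⟩
  dsimp only
  have hsub : uIcc 0 s ⊆ uIcc 0 L :=
    uIcc_subset_uIcc left_mem_uIcc (by rw [uIcc_of_le (hs.1.trans hs.2)]; exact hs)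
  rw [intervalIntegral.integral_add (h1.1.mono_set hsub) (h2.1.mono_set hsub),
    h1.2 s hs, h2.2 s hs]
  ring

lemma const_mul (c : ℝ) (h : IsPrim L F f) :
    IsPrim L (fun s => c * F s) (fun t => c * f t) := by
  refine ⟨h.1.const_mul c, fun s hs => ?_⟩
  dsimp only
  rw [intervalIntegral.integral_const_mul, h.2 s hs]
  ring

lemma sub (h1 : IsPrim L F f) (h2 : IsPrim L G g) :
    IsPrim L (fun s => F s - G s) (fun t => f t - g t) := by
  have := h1.add ((h2.const_mul (-1)))
  simpa [sub_eq_add_neg, neg_one_mul] using this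

lemma mul (hL : 0 ≤ L) (hF : IsPrim L F f) (hG : IsPrim L G g) :
    IsPrim L (fun s => F s * G s) (fun t => f t * G t + F t * g t) := by
  have hFc : ContinuousOn F (uIcc (0:ℝ) L) := by rw [uIcc_of_le hL]; exact hF.continuousOn hL
  have hGc : ContinuousOn G (uIcc (0:ℝ) L) := by rw [uIcc_of_le hL]; exact hG.continuousOn hL
  have hfG : IntervalIntegrable (fun t => f t * G t) volume 0 L := hF.1.mul_continuousOn hGc
  have hFg : IntervalIntegrable (fun t => F t * g t) volume 0 L := hG.1.continuousOn_mul hFc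
  refine ⟨hfG.add hFg, fun s hs => ?_⟩
  have hs0 : 0 ≤ s := hs.1
  have hsub : uIcc 0 s ⊆ uIcc 0 L :=
    uIcc_subset_uIcc left_mem_uIcc (by rw [uIcc_of_le (hs0.trans hs.2)]; exact hs)
  have hIccsub : Icc (0:ℝ) s ⊆ Icc 0 L := Icc_subset_Icc le_rfl hs.2
  have hf' : IntervalIntegrable f volume 0 s := hF.1.mono_set hsub
  have hg' : IntervalIntegrable g volume 0 s := hG.1.mono_set hsub
  have hfint : IntegrableOn f (uIcc 0 s) volume := by
    rw [uIcc_of_le hs0]; exact (intervalIntegrable_iff_integrableOn_Icc_of_le hs0).1 hf'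
  have hgint : IntegrableOn g (uIcc 0 s) volume := by
    rw [uIcc_of_le hs0]; exact (intervalIntegrable_iff_integrableOn_Icc_of_le hs0).1 hg'
  have hPf : ContinuousOn (fun x => ∫ t in (0:ℝ)..x, f t) (uIcc (0:ℝ) s) :=
    intervalIntegral.continuousOn_primitive_interval hfint
  have hPg : ContinuousOn (fun x => ∫ t in (0:ℝ)..x, g t) (uIcc (0:ℝ) s) :=
    intervalIntegral.continuousOn_primitive_interval hgint
  -- rewrite the two pieces
  have e2 : (∫ t in (0:ℝ)..s, f t * G t)
      = G 0 * (∫ t in (0:ℝ)..s, f t) + ∫ t in (0:ℝ)..s, f t * ∫ y in (0:ℝ)..t, g y := by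
    have : EqOn (fun t => f t * G t)
        (fun t => G 0 * f t + f t * ∫ y in (0:ℝ)..t, g y) (uIcc (0:ℝ) s) := by
      intro t ht
      rw [uIcc_of_le hs0] at ht
      simp only [hG.2 t (hIccsub ht)]
      ring
    rw [intervalIntegral.integral_congr this,
      intervalIntegral.integral_add ((hf'.const_mul _))
        (hf'.mul_continuousOn hPg),
      intervalIntegral.integral_const_mul]
  have e3 : (∫ t in (0:ℝ)..s, F t * g t)
      = F 0 * (∫ t in (0:ℝ)..s, g t) + ∫ t in (0:ℝ)..s, g t * ∫ y in (0:ℝ)..t, f y := by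
    have : EqOn (fun t => F t * g t)
        (fun t => F 0 * g t + g t * ∫ y in (0:ℝ)..t, f y) (uIcc (0:ℝ) s) := by
      intro t ht
      rw [uIcc_of_le hs0] at ht
      simp only [hF.2 t (hIccsub ht)]
      ring
    rw [intervalIntegral.integral_congr this,
      intervalIntegral.integral_add ((hg'.const_mul _))
        (hg'.mul_continuousOn hPf),
      intervalIntegral.integral_const_mul]
  dsimp only
  rw [intervalIntegral.integral_add (hfG.mono_set hsub) (hFg.mono_set hsub), e2, e3,
    hF.2 s hs, hG.2 s hs]
  linear_combination primSplit hs0 hf' hg'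

lemma eq_const (hL : 0 ≤ L) {T h : ℝ → ℝ} (hT : IsPrim L T h) (h0 : ∀ t, h t = 0) :
    ∀ s ∈ Icc (0:ℝ) L, T s = T 0 := by
  intro s hs
  rw [hT.2 s hs]
  have : (fun t => h t) = (fun _ => (0:ℝ)) := funext h0
  simp [this]

end IsPrim


open Metric in
lemma ae_hasDerivAt_primitive {E : Type*} [NormedAddCommGroup E] [NormedSpace ℝ E]
    [CompleteSpace E] {L : ℝ} (g : ℝ → E) (hg : IntervalIntegrable g volume 0 L) :
    ∀ᵐ s : ℝ, s ∈ Ioo (0:ℝ) L →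
      HasDerivAt (fun t => ∫ τ in (0:ℝ)..t, g τ) (g s) s := by
  set G : ℝ → E := (Ioo (0:ℝ) L).indicator g with hGdef
  have hGint : Integrable G volume := by
    rw [integrable_indicator_iff measurableSet_Ioo]
    exact hg.1.mono_set Ioo_subset_Ioc_self
  have hloc := hGint.locallyIntegrable
  filter_upwards [IsUnifLocDoublingMeasure.ae_tendsto_average_norm_sub volume hloc 1] with s hs hsIoo
  have hδ : Tendsto (fun t : ℝ => dist t s) (𝓝[≠] s) (𝓝[>] 0) := by
    refine tendsto_nhdsWithin_iff.2 ⟨?_, ?_⟩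
    · have : Tendsto (fun t : ℝ => dist t s) (𝓝 s) (𝓝 (dist s s)) :=
        (continuous_id.dist continuous_const).tendsto s
      rw [dist_self] at this
      exact this.mono_left nhdsWithin_le_nhds
    · filter_upwards [self_mem_nhdsWithin] with t ht
      exact mem_Ioi.2 (dist_pos.2 ht)
  have key : Tendsto (fun t : ℝ => ⨍ y in closedBall s (dist t s), ‖G y - G s‖)
      (𝓝[≠] s) (𝓝 0) :=
    hs (fun _ => s) (fun t => dist t s) hδ
      (Eventually.of_forall (fun t => mem_closedBall_self (by positivity)))
  rw [hasDerivAt_iff_isLittleO, Asymptotics.isLittleO_iff]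
  intro c hc
  obtain ⟨ε, hε, hball⟩ := Metric.isOpen_iff.1 isOpen_Ioo s hsIoo
  have h1 : ∀ᶠ t in 𝓝 s, closedBall s (dist t s) ⊆ Ioo 0 L := by
    filter_upwards [Metric.ball_mem_nhds s (half_pos hε)] with t ht
    refine subset_trans (fun y hy => ?_) hball
    have h1' : dist y s ≤ dist t s := Metric.mem_closedBall.1 hy
    have h2' : dist t s < ε / 2 := Metric.mem_ball.1 ht
    exact Metric.mem_ball.2 (lt_of_le_of_lt h1' (by linarith))
  have h2 : ∀ᶠ t in 𝓝[≠] s,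
      (⨍ y in closedBall s (dist t s), ‖G y - G s‖) < c / 2 :=
    key.eventually_lt_const (by positivity)
  have hL0 : (0:ℝ) ≤ L := le_of_lt (hsIoo.1.trans hsIoo.2)
  have hmain : ∀ᶠ t in 𝓝[≠] s,
      ‖(∫ τ in (0:ℝ)..t, g τ) - (∫ τ in (0:ℝ)..s, g τ) - (t - s) • g s‖ ≤ c * ‖t - s‖ := by
    filter_upwards [eventually_nhdsWithin_of_eventually_nhds h1, h2, self_mem_nhdsWithin]
      with t hcb havg htne
    have htI : t ∈ Ioo 0 L := hcb (Metric.mem_closedBall.2 le_rfl)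
    have hsub2 : uIcc s t ⊆ closedBall s (dist t s) := by
      intro y hy
      rw [Metric.mem_closedBall, Real.dist_eq, Real.dist_eq]
      rcases le_total s t with h | h
      · rw [uIcc_of_le h] at hy
        rw [abs_of_nonneg (by linarith [hy.1]), abs_of_nonneg (sub_nonneg.2 h)]
        linarith [hy.2]
      · rw [uIcc_of_ge h] at hy
        rw [abs_of_nonpos (by linarith [hy.2]), abs_of_nonpos (sub_nonpos.2 h)]
        linarith [hy.1]
    have hIsub : uIcc s t ⊆ Ioo 0 L := hsub2.trans hcb
    have huIccL : uIcc s t ⊆ uIcc 0 L := by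
      rw [uIcc_of_le hL0]
      exact hIsub.trans Ioo_subset_Icc_self
    have hgt : IntervalIntegrable g volume s t := hg.mono_set huIccL
    have htmem : t ∈ uIcc (0:ℝ) L := by
      rw [uIcc_of_le hL0]; exact Ioo_subset_Icc_self htI
    have hsmem : s ∈ uIcc (0:ℝ) L := by
      rw [uIcc_of_le hL0]; exact Ioo_subset_Icc_self hsIoo
    have hg0t : IntervalIntegrable g volume 0 t :=
      hg.mono_set (uIcc_subset_uIcc left_mem_uIcc htmem)
    have hg0s : IntervalIntegrable g volume 0 s :=
      hg.mono_set (uIcc_subset_uIcc left_mem_uIcc hsmem)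
    have hsplit : (∫ τ in (0:ℝ)..t, g τ) - (∫ τ in (0:ℝ)..s, g τ) = ∫ τ in s..t, g τ :=
      intervalIntegral.integral_interval_sub_left hg0t hg0s
    have hconst : (t - s) • g s = ∫ _ in s..t, g s := (intervalIntegral.integral_const (g s)).symm
    rw [hsplit, hconst, ← intervalIntegral.integral_sub hgt (intervalIntegrable_const)]
    have hb1 : ‖∫ τ in s..t, (g τ - g s)‖ ≤ ∫ y in (uIoc s t), ‖g y - g s‖ :=
      intervalIntegral.norm_integral_le_integral_norm_uIoc
    have hcong : (∫ y in (uIoc s t), ‖g y - g s‖) = ∫ y in (uIoc s t), ‖G y - G s‖ := by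
      refine setIntegral_congr_fun measurableSet_uIoc (fun y hy => ?_)
      rw [hGdef, indicator_of_mem (hIsub (uIoc_subset_uIcc hy)) g, indicator_of_mem hsIoo g]
    have hnormint : IntegrableOn (fun y => ‖G y - G s‖) (closedBall s (dist t s)) volume :=
      ((hGint.integrableOn.sub (integrableOn_const measure_closedBall_lt_top.ne)).norm)
    have hb2 : (∫ y in (uIoc s t), ‖G y - G s‖) ≤ ∫ y in closedBall s (dist t s), ‖G y - G s‖ := by
      refine setIntegral_mono_set hnormint ?_ ?_
      · exact Eventually.of_forall (fun y => norm_nonneg _)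
      · exact HasSubset.Subset.eventuallyLE ((uIoc_subset_uIcc).trans hsub2)
    have hvol : (volume (closedBall s (dist t s))).toReal = 2 * dist t s := by
      rw [Real.volume_closedBall]
      exact ENNReal.toReal_ofReal (by positivity)
    have hb3 : (∫ y in closedBall s (dist t s), ‖G y - G s‖)
        = 2 * dist t s * ⨍ y in closedBall s (dist t s), ‖G y - G s‖ := by
      rw [setAverage_eq, measureReal_def, hvol, smul_eq_mul, ← mul_assoc, mul_inv_cancel₀ (by
        have : (0:ℝ) < dist t s := dist_pos.2 htne
        positivity), one_mul]
    have hd : dist t s = ‖t - s‖ := by rw [Real.dist_eq, Real.norm_eq_abs]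
    have hdpos : (0:ℝ) < dist t s := dist_pos.2 htne
    calc ‖∫ τ in s..t, (g τ - g s)‖ ≤ ∫ y in (uIoc s t), ‖g y - g s‖ := hb1
      _ = ∫ y in (uIoc s t), ‖G y - G s‖ := hcong
      _ ≤ ∫ y in closedBall s (dist t s), ‖G y - G s‖ := hb2
      _ = 2 * dist t s * ⨍ y in closedBall s (dist t s), ‖G y - G s‖ := hb3
      _ ≤ 2 * dist t s * (c / 2) := by nlinarith
      _ = c * ‖t - s‖ := by rw [← hd]; ring
  rw [eventually_nhdsWithin_iff] at hmain
  filter_upwards [hmain] with t ht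
  by_cases h : t = s
  · subst h
    simp
  · exact ht h


lemma null_coord_preimage {N : Set ℝ} (hN : volume N = 0) (i : Fin 3) :
    volume {x : EuclideanSpace ℝ (Fin 3) | x i ∈ N} = 0 := by
  have hpi : (volume : Measure (Fin 3 → ℝ)) (Function.eval i ⁻¹' N) = 0 := by
    rw [volume_pi]
    exact Measure.pi_eval_preimage_null _ hN
  have hmp := EuclideanSpace.volume_preserving_symm_measurableEquiv_toLp (Fin 3)
  have heq : {x : EuclideanSpace ℝ (Fin 3) | x i ∈ N}
      = (MeasurableEquiv.toLp 2 (Fin 3 → ℝ)).symm ⁻¹' (Function.eval i ⁻¹' N) := rfl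
  rw [heq]
  calc volume ((MeasurableEquiv.toLp 2 (Fin 3 → ℝ)).symm ⁻¹' (Function.eval i ⁻¹' N))
      = (Measure.map (MeasurableEquiv.toLp 2 (Fin 3 → ℝ)).symm volume) (Function.eval i ⁻¹' N) :=
        ((MeasurableEquiv.toLp 2 (Fin 3 → ℝ)).symm.map_apply _).symm
    _ = 0 := by rw [hmp.map_eq]; exact hpi


lemma IntervalIntegrable.clm_comp {E F : Type*} [NormedAddCommGroup E] [NormedSpace ℝ E]
    [NormedAddCommGroup F] [NormedSpace ℝ F] {f : ℝ → E} {a b : ℝ}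
    (hf : IntervalIntegrable f volume a b) (T : E →L[ℝ] F) :
    IntervalIntegrable (fun t => T (f t)) volume a b :=
  ⟨T.integrable_comp hf.1, T.integrable_comp hf.2⟩

lemma isPrim_component {L : ℝ} (h hd : ℝ → E3) (hint : IntervalIntegrable hd volume 0 L)
    (hrep : ∀ s ∈ Icc (0:ℝ) L, h s = h 0 + ∫ t in (0:ℝ)..s, hd t) (i : Fin 3) :
    IsPrim L (fun s => h s i) (fun t => hd t i) := by
  constructor
  · exact hint.clm_comp (EuclideanSpace.proj i)
  · intro s hs
    have hL0 : (0:ℝ) ≤ L := hs.1.trans hs.2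
    have hsub : uIcc (0:ℝ) s ⊆ uIcc (0:ℝ) L :=
      uIcc_subset_uIcc left_mem_uIcc (by rw [uIcc_of_le hL0]; exact hs)
    have h1 := congrArg (fun z : E3 => (EuclideanSpace.proj (𝕜 := ℝ) i) z) (hrep s hs)
    simp only [map_add] at h1
    rw [← (EuclideanSpace.proj (𝕜 := ℝ) i).intervalIntegral_comp_comm
      (hint.mono_set hsub)] at h1
    simpa using h1

end Aux

set_option maxRecDepth 10000 in
set_option maxHeartbeats 1000000 in
/-- The placement map is differentiable at almost every point of the
interior of `Ω`, and at such points its Jacobian determinant equals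
`1 - ζ₁ k′(s) - ζ₂ k″(s)`. -/
theorem placement_jacobian_det
    (p L : ℝ) (hp : 1 < p) (hL : 0 < L)
    (k₁ k₂ ω : ℝ → ℝ)
    (hk₁ : MemLp k₁ (ENNReal.ofReal p) (volume.restrict (Icc (0:ℝ) L)))
    (hk₂ : MemLp k₂ (ENNReal.ofReal p) (volume.restrict (Icc (0:ℝ) L)))
    (hω : MemLp ω (ENNReal.ofReal p) (volume.restrict (Icc (0:ℝ) L)))
    (rhat uhat vhat what : E3)
    (huhat : ‖uhat‖ = 1) (hvhat : ‖vhat‖ = 1) (huv : (inner ℝ uhat vhat : ℝ) = 0)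
    (hwhat : what = cross3 uhat vhat)
    (u v w r : ℝ → E3)
    (hsol : RodSolution L k₁ k₂ ω rhat uhat vhat what u v w r)
    -- the cross-sections and the reference configuration Ω
    (A : ℝ → Set (ℝ × ℝ)) (Ω : Set E3)
    (hΩ : Ω = {x : E3 | x 0 ∈ Icc (0:ℝ) L ∧ (x 1, x 2) ∈ A (x 0)})
    (hclos : ∃ U : Set E3, IsOpen U ∧ Ω = closure U)
    (R : ℝ) (hR : 0 < R) (hthin : ∀ x ∈ Ω, |x 1| < R ∧ |x 2| < R) :
    ∀ᵐ x ∂(volume.restrict (interior Ω)),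
      ∃ Df : E3 →L[ℝ] E3,
        HasFDerivAt (placement r u v) Df x ∧
        LinearMap.det (Df : E3 →ₗ[ℝ] E3) = 1 - (x 1) * k₁ (x 0) - (x 2) * k₂ (x 0) := by
  obtain ⟨hu0, hv0, hw0, hr0, hIu, hIv, hIw, hIr, hrep⟩ := hsol
  have hL0 : (0:ℝ) ≤ L := hL.le
  have hrepu : ∀ s ∈ Icc (0:ℝ) L, u s = u 0 + ∫ t in (0:ℝ)..s, (ω t • v t - k₁ t • w t) := by
    intro s hs; rw [hu0]; exact (hrep s hs).1
  have hrepv : ∀ s ∈ Icc (0:ℝ) L,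
      v s = v 0 + ∫ t in (0:ℝ)..s, (-(ω t) • u t - k₂ t • w t) := by
    intro s hs; rw [hv0]; exact (hrep s hs).2.1
  have hrepw : ∀ s ∈ Icc (0:ℝ) L,
      w s = w 0 + ∫ t in (0:ℝ)..s, (k₁ t • u t + k₂ t • v t) := by
    intro s hs; rw [hw0]; exact (hrep s hs).2.2.1
  have hrepr : ∀ s ∈ Icc (0:ℝ) L, r s = r 0 + ∫ t in (0:ℝ)..s, w t := by
    intro s hs; rw [hr0]; exact (hrep s hs).2.2.2
  have Pu : ∀ i : Fin 3, IsPrim L (fun s => u s i) (fun t => (ω t • v t - k₁ t • w t) i) :=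
    fun i => isPrim_component u _ hIu hrepu i
  have Pv : ∀ i : Fin 3, IsPrim L (fun s => v s i) (fun t => (-(ω t) • u t - k₂ t • w t) i) :=
    fun i => isPrim_component v _ hIv hrepv i
  have Pw : ∀ i : Fin 3, IsPrim L (fun s => w s i) (fun t => (k₁ t • u t + k₂ t • v t) i) :=
    fun i => isPrim_component w _ hIw hrepw i
  -- the scalar triple product w ⋅ (u × v) is constant
  have hT := (((((((Pw 0).mul hL0 ((Pu 1).mul hL0 (Pv 2))).sub
      ((Pw 0).mul hL0 ((Pu 2).mul hL0 (Pv 1)))).add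
      ((Pw 1).mul hL0 ((Pu 2).mul hL0 (Pv 0)))).sub
      ((Pw 1).mul hL0 ((Pu 0).mul hL0 (Pv 2)))).add
      ((Pw 2).mul hL0 ((Pu 0).mul hL0 (Pv 1)))).sub
      ((Pw 2).mul hL0 ((Pu 1).mul hL0 (Pv 0))))
  have hTconst := hT.eq_const hL0 (fun t => by
    simp only [PiLp.sub_apply, PiLp.add_apply, PiLp.smul_apply, smul_eq_mul, neg_mul]
    ring)
  -- initial value of the triple product
  have hnu : uhat 0 ^ 2 + uhat 1 ^ 2 + uhat 2 ^ 2 = 1 := by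
    have h := huhat
    rw [EuclideanSpace.norm_eq] at h
    have h2 := congrArg (fun t : ℝ => t ^ 2) h
    simp only [Real.sq_sqrt (by positivity : (0:ℝ) ≤ ∑ i, ‖uhat i‖ ^ 2), one_pow] at h2
    simpa [Fin.sum_univ_three, Real.norm_eq_abs, sq_abs] using h2
  have hnv : vhat 0 ^ 2 + vhat 1 ^ 2 + vhat 2 ^ 2 = 1 := by
    have h := hvhat
    rw [EuclideanSpace.norm_eq] at h
    have h2 := congrArg (fun t : ℝ => t ^ 2) h
    simp only [Real.sq_sqrt (by positivity : (0:ℝ) ≤ ∑ i, ‖vhat i‖ ^ 2), one_pow] at h2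
    simpa [Fin.sum_univ_three, Real.norm_eq_abs, sq_abs] using h2
  have hin : uhat 0 * vhat 0 + uhat 1 * vhat 1 + uhat 2 * vhat 2 = 0 := by
    have h := huv
    rw [PiLp.inner_apply] at h
    simpa [Fin.sum_univ_three, RCLike.inner_apply, starRingEnd_apply, star_trivial, mul_comm] using h
  have hTs : ∀ s ∈ Icc (0:ℝ) L,
      w s 0 * (u s 1 * v s 2) - w s 0 * (u s 2 * v s 1) + w s 1 * (u s 2 * v s 0)
        - w s 1 * (u s 0 * v s 2) + w s 2 * (u s 0 * v s 1) - w s 2 * (u s 1 * v s 0) = 1 := by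
    intro s hs
    have h1 := hTconst s hs
    rw [h1, hu0, hv0, hw0, hwhat]
    simp only [cross3, WithLp.ofLp_toLp, Matrix.cons_val_zero, Matrix.cons_val_one, Matrix.head_cons,
      Matrix.cons_val_two, Matrix.tail_cons]
    linear_combination (vhat 0 ^ 2 + vhat 1 ^ 2 + vhat 2 ^ 2) * hnu + hnv
      - (uhat 0 * vhat 0 + uhat 1 * vhat 1 + uhat 2 * vhat 2) * hin
  -- a.e. differentiability of u, v, r
  have hAE : ∀ᵐ s : ℝ, s ∈ Ioo (0:ℝ) L →
      (HasDerivAt u (ω s • v s - k₁ s • w s) s ∧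
       HasDerivAt v (-(ω s) • u s - k₂ s • w s) s ∧
       HasDerivAt r (w s) s) := by
    filter_upwards [ae_hasDerivAt_primitive _ hIu, ae_hasDerivAt_primitive _ hIv,
      ae_hasDerivAt_primitive _ hIr] with s h1 h2 h4
    intro hsIoo
    have hmem : Ioo (0:ℝ) L ∈ 𝓝 s := isOpen_Ioo.mem_nhds hsIoo
    refine ⟨((h1 hsIoo).const_add (u 0)).congr_of_eventuallyEq ?_,
      ((h2 hsIoo).const_add (v 0)).congr_of_eventuallyEq ?_,
      ((h4 hsIoo).const_add (r 0)).congr_of_eventuallyEq ?_⟩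
    · filter_upwards [hmem] with t ht
      exact hrepu t (Ioo_subset_Icc_self ht)
    · filter_upwards [hmem] with t ht
      exact hrepv t (Ioo_subset_Icc_self ht)
    · filter_upwards [hmem] with t ht
      exact hrepr t (Ioo_subset_Icc_self ht)
  -- transfer the a.e. statement to E3
  have hgood : ∀ᵐ x ∂(volume.restrict (interior Ω)), (x 0 ∈ Ioo (0:ℝ) L →
      (HasDerivAt u (ω (x 0) • v (x 0) - k₁ (x 0) • w (x 0)) (x 0) ∧
       HasDerivAt v (-(ω (x 0)) • u (x 0) - k₂ (x 0) • w (x 0)) (x 0) ∧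
       HasDerivAt r (w (x 0)) (x 0))) := by
    refine ae_restrict_of_ae (ae_iff.2 ?_)
    exact null_coord_preimage (ae_iff.1 hAE) 0
  have hends : volume ({0, L} : Set ℝ) = 0 := by
    have : ({0, L} : Set ℝ).Finite := (Set.finite_singleton L).insert 0
    exact this.measure_zero volume
  have h0L : ∀ᵐ x ∂(volume.restrict (interior Ω)), x 0 ∉ ({0, L} : Set ℝ) := by
    refine ae_restrict_of_ae (ae_iff.2
      (measure_mono_null (fun y hy => ?_) (null_coord_preimage hends 0)))
    simp only [mem_setOf_eq] at hy ⊢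
    exact not_not.1 hy
  have hmemΩ : ∀ᵐ x ∂(volume.restrict (interior Ω)), x ∈ interior Ω :=
    ae_restrict_mem isOpen_interior.measurableSet
  filter_upwards [hgood, h0L, hmemΩ] with x hx1 hx2 hx3
  have hxIcc : x 0 ∈ Icc (0:ℝ) L := by
    have hxθ : x ∈ Ω := interior_subset hx3
    rw [hΩ] at hxθ
    exact hxθ.1
  have hxIoo : x 0 ∈ Ioo (0:ℝ) L := by
    refine ⟨hxIcc.1.lt_of_ne' ?_, hxIcc.2.lt_of_ne ?_⟩
    · intro h; exact hx2 (by rw [← h]; exact mem_insert _ _)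
    · intro h; exact hx2 (by rw [h]; exact mem_insert_of_mem _ rfl)
  obtain ⟨hu', hv', hr'⟩ := hx1 hxIoo
  -- construct the derivative
  set du : E3 := ω (x 0) • v (x 0) - k₁ (x 0) • w (x 0) with hdu
  set dv : E3 := -(ω (x 0)) • u (x 0) - k₂ (x 0) • w (x 0) with hdv
  set π0 : E3 →L[ℝ] ℝ := EuclideanSpace.proj 0 with hπ0
  set π1 : E3 →L[ℝ] ℝ := EuclideanSpace.proj 1 with hπ1
  set π2 : E3 →L[ℝ] ℝ := EuclideanSpace.proj 2 with hπ2
  have h0 : HasFDerivAt (fun y : E3 => y 0) π0 x := π0.hasFDerivAt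
  have h1 : HasFDerivAt (fun y : E3 => y 1) π1 x := π1.hasFDerivAt
  have h2 : HasFDerivAt (fun y : E3 => y 2) π2 x := π2.hasFDerivAt
  have hrc : HasFDerivAt (fun y : E3 => r (y 0))
      ((ContinuousLinearMap.smulRight (1 : ℝ →L[ℝ] ℝ) (w (x 0))).comp π0) x :=
    (hasDerivAt_iff_hasFDerivAt.1 hr').comp x h0
  have huc : HasFDerivAt (fun y : E3 => u (y 0))
      ((ContinuousLinearMap.smulRight (1 : ℝ →L[ℝ] ℝ) du).comp π0) x :=
    (hasDerivAt_iff_hasFDerivAt.1 hu').comp x h0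
  have hvc : HasFDerivAt (fun y : E3 => v (y 0))
      ((ContinuousLinearMap.smulRight (1 : ℝ →L[ℝ] ℝ) dv).comp π0) x :=
    (hasDerivAt_iff_hasFDerivAt.1 hv').comp x h0
  have hs1 : HasFDerivAt (fun y : E3 => (y 1) • u (y 0))
      (x 1 • ((ContinuousLinearMap.smulRight (1 : ℝ →L[ℝ] ℝ) du).comp π0)
        + π1.smulRight (u (x 0))) x := h1.smul huc
  have hs2 : HasFDerivAt (fun y : E3 => (y 2) • v (y 0))
      (x 2 • ((ContinuousLinearMap.smulRight (1 : ℝ →L[ℝ] ℝ) dv).comp π0)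
        + π2.smulRight (v (x 0))) x := h2.smul hvc
  set Df := (ContinuousLinearMap.smulRight (1 : ℝ →L[ℝ] ℝ) (w (x 0))).comp π0
    + (x 1 • ((ContinuousLinearMap.smulRight (1 : ℝ →L[ℝ] ℝ) du).comp π0)
        + π1.smulRight (u (x 0)))
    + (x 2 • ((ContinuousLinearMap.smulRight (1 : ℝ →L[ℝ] ℝ) dv).comp π0)
        + π2.smulRight (v (x 0))) with hDf
  refine ⟨Df, (hrc.add hs1).add hs2, ?_⟩
  set b := (EuclideanSpace.basisFun (Fin 3) ℝ).toBasis with hb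
  rw [← LinearMap.det_toMatrix b, Matrix.det_fin_three]
  have happ : ∀ (j i : Fin 3), LinearMap.toMatrix b b (Df : E3 →ₗ[ℝ] E3) i j
      = Df (EuclideanSpace.single j 1) i := by
    intro j i
    rw [LinearMap.toMatrix_apply]
    simp [hb, OrthonormalBasis.coe_toBasis_repr_apply, EuclideanSpace.basisFun_repr,
      OrthonormalBasis.coe_toBasis, EuclideanSpace.basisFun_apply]
  simp only [happ]
  simp only [hDf, hdu, hdv, hπ0, hπ1, hπ2, ContinuousLinearMap.add_apply,
    ContinuousLinearMap.coe_smul', Pi.smul_apply, ContinuousLinearMap.comp_apply,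
    ContinuousLinearMap.smulRight_apply, ContinuousLinearMap.one_apply,
    PiLp.proj_apply, EuclideanSpace.single_apply,
    PiLp.add_apply, PiLp.smul_apply, PiLp.sub_apply, smul_eq_mul]
  simp only [Fin.isValue, show (0:Fin 3) ≠ 1 by decide, show (0:Fin 3) ≠ 2 by decide,
    show (1:Fin 3) ≠ 0 by decide, show (1:Fin 3) ≠ 2 by decide, show (2:Fin 3) ≠ 0 by decide,
    show (2:Fin 3) ≠ 1 by decide, if_true, if_neg, reduceIte]
  norm_num
  linear_combination (1 - x 1 * k₁ (x 0) - x 2 * k₂ (x 0)) * hTs (x 0) hxIcc
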